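/- Let p be a prime, n ≥ 1, 1 ≤ t ≤ n, n′ = n+t+1, and let 𝒵 = { ξ(f + g + Σ_{r=1}^t x_{π_r(1)} x_{n+r} + Σ_{r=1}^t h_r x_{π_r(m_r)}) : h ∈ (Z_p)^t } be a traditional ZCZ sequence set from the paper's construction, where f(x) = Σ_{r=1}^t Σ_{α=1}^{m_r−1} x_{π_r(α)} x_{π_r(α+1)} + Σ_{α=1}^n d_α x_α (for a partition {V_1,…,V_t} of {1,…,n} with m_r = |V_r| and bijections π_r : {1,…,m_r} → V_r, d_α ∈ Z_p) and g = Σ_{r=2}^{t+1} c_r x_{n+r} x_{n+1} + Σ_{2≤μ<ν≤t} d_{μν} x_{n+μ} x_{n+ν} + Σ_{β=1}^{t+1} e_β x_{n+β} + e′ (coefficients in Z_p, c_{t+1} ≠ 0). Then for any h ≠ h′ in (Z_p)^t, the Hamming distance between the Z_p-valued vectors ξ corresponding to h and h′ is at least (p−1)p^{n′−1}; i.e., the minimum Hamming distance of 𝒵 is at least (p−1)p^{n′−1}. -/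
import Mathlib


open Finset

/-- The `k`-th base-`p` digit of `x`, viewed as an element of `ZMod p`. -/
def digitZ (p x k : ℕ) : ZMod p := ((x / p ^ k) % p : ℕ)

/-- The `Z_p`-valued vector `ξ(f)` of length `p^m` associated with an extended Boolean
function `f : (Z_p)^m → Z_p`. -/
def xiVec (p m : ℕ) (f : (Fin m → ZMod p) → ZMod p) : Fin (p ^ m) → ZMod p :=
  fun x => f fun k => digitZ p (x : ℕ) (k : ℕ)

lemma nat_digits_inj {p : ℕ} (hp : 2 ≤ p) :
    ∀ m x y, x < p ^ m → y < p ^ m →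
      (∀ k, k < m → x / p ^ k % p = y / p ^ k % p) → x = y := by
  intro m
  induction m with
  | zero => intro x y hx hy _; simp [pow_zero] at hx hy; omega
  | succ m ih =>
    intro x y hx hy hd
    have h0 := hd 0 (by omega)
    simp only [pow_zero, Nat.div_one] at h0
    have hdiv : x / p = y / p := by
      apply ih
      · exact Nat.div_lt_of_lt_mul (by rw [← pow_succ']; exact hx)
      · exact Nat.div_lt_of_lt_mul (by rw [← pow_succ']; exact hy)
      · intro k hk
        have e1 : ∀ z : ℕ, z / p / p ^ k = z / p ^ (k + 1) := by
          intro z; rw [Nat.div_div_eq_div_mul, ← pow_succ']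
        rw [e1, e1]
        exact hd (k + 1) (by omega)
    conv_lhs => rw [← Nat.div_add_mod x p]
    rw [hdiv, h0, Nat.div_add_mod]

lemma digit_map_bijective (p : ℕ) [Fact p.Prime] (m : ℕ) :
    Function.Bijective (fun (x : Fin (p ^ m)) (k : Fin m) => digitZ p (x : ℕ) (k : ℕ)) := by
  have hp : 2 ≤ p := (Fact.out : p.Prime).two_le
  have : NeZero p := ⟨by omega⟩
  rw [Fintype.bijective_iff_injective_and_card]
  constructor
  · intro x y hxy
    apply Fin.ext
    apply nat_digits_inj hp m _ _ x.isLt y.isLt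
    intro k hk
    have := congrFun hxy ⟨k, hk⟩
    simp only [digitZ] at this
    have h1 : (((x : ℕ) / p ^ k % p : ℕ) : ZMod p).val = (x : ℕ) / p ^ k % p :=
      ZMod.val_cast_of_lt (Nat.mod_lt _ (by omega))
    have h2 : (((y : ℕ) / p ^ k % p : ℕ) : ZMod p).val = (y : ℕ) / p ^ k % p :=
      ZMod.val_cast_of_lt (Nat.mod_lt _ (by omega))
    rw [← h1, ← h2, this]
  · simp [ZMod.card]

lemma count_lb (p : ℕ) [Fact p.Prime] (m : ℕ) (j0 : Fin m) (a : ZMod p) (ha : a ≠ 0)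
    (L : (Fin m → ZMod p) → ZMod p)
    (hL : ∀ v w : Fin m → ZMod p, (∀ j, j ≠ j0 → v j = w j) →
      L v - L w = a * (v j0 - w j0)) :
    (p - 1) * p ^ (m - 1) ≤ #{v : Fin m → ZMod p | L v ≠ 0} := by
  classical
  have hp : 2 ≤ p := (Fact.out : p.Prime).two_le
  have : NeZero p := ⟨by omega⟩
  -- the "kernel" part has at most p^(m-1) elements
  have hker : #{v : Fin m → ZMod p | L v = 0} ≤ p ^ (m - 1) := by
    have hcard : Fintype.card ({j : Fin m // j ≠ j0} → ZMod p) = p ^ (m - 1) := by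
      rw [Fintype.card_fun, ZMod.card]
      congr 1
      simp [Fintype.card_subtype_compl, Fintype.card_subtype_eq]
    calc #{v : Fin m → ZMod p | L v = 0}
        ≤ #(Finset.univ : Finset ({j : Fin m // j ≠ j0} → ZMod p)) := by
          apply Finset.card_le_card_of_injOn (fun v (j : {j : Fin m // j ≠ j0}) => v j.1)
            (fun _ _ => Finset.mem_univ _)
          intro v hv w hw hvw
          simp only [Finset.mem_coe, Finset.mem_filter, Finset.mem_univ, true_and] at hv hw
          have hagree : ∀ j, j ≠ j0 → v j = w j := fun j hj => congrFun hvw ⟨j, hj⟩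
          have := hL v w hagree
          rw [hv, hw, sub_self] at this
          have h0 : v j0 - w j0 = 0 := by
            rcases mul_eq_zero.mp this.symm with h | h
            · exact absurd h ha
            · exact h
          funext j
          by_cases hj : j = j0
          · subst hj; exact sub_eq_zero.mp h0
          · exact hagree j hj
      _ = p ^ (m - 1) := by rw [Finset.card_univ, hcard]
  have htotal : #{v : Fin m → ZMod p | L v = 0} + #{v : Fin m → ZMod p | L v ≠ 0}
      = p ^ m := by
    rw [Finset.card_filter_add_card_filter_not, Finset.card_univ, Fintype.card_fun,
      ZMod.card, Fintype.card_fin]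
  have hm1 : 1 ≤ m := Nat.pos_of_ne_zero (by rintro rfl; exact j0.elim0)
  have hpm : p ^ m = p ^ (m - 1) * p := by
    rw [← pow_succ]; congr 1; omega
  have hmul : (p - 1) * p ^ (m - 1) = p ^ (m - 1) * p - p ^ (m - 1) := by
    rw [Nat.mul_comm, Nat.mul_sub, Nat.mul_one]
  set A := #{v : Fin m → ZMod p | L v = 0}
  set B := #{v : Fin m → ZMod p | L v ≠ 0}
  set P := p ^ (m - 1)
  rw [hmul]
  omega

/-- Corollary 5: for the traditional ZCZ sequence set
`𝒵 = { ξ(f + g + ∑_r x_{π_r(1)} x_{n+r} + ∑_r h_r x_{π_r(m_r)}) : h ∈ (Z_p)^t }` from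
the paper's construction, the Hamming distance between the `Z_p`-valued vectors
corresponding to distinct `h ≠ h'` is at least `(p−1)p^{n'−1}` where `n' = n+t+1`;
i.e. the minimum Hamming distance of `𝒵` is at least `(p−1)p^{n'−1} = (p−1)p^{n+t}`.
(Variables 0-indexed; encodings of the partition and of the coefficients of `g` are as
in the construction.) -/
theorem statement9 (p n t : ℕ) [Fact p.Prime] (hn : 1 ≤ n) (ht : 1 ≤ t) (htn : t ≤ n)
    (m : Fin t → ℕ) (hm : ∀ r, 1 ≤ m r)
    (π : Fin t → ℕ → Fin n)
    (hπ : Function.Bijective fun q : Σ r : Fin t, Fin (m r) => π q.1 (q.2 : ℕ))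
    (d : Fin n → ZMod p)
    (cg : Fin t → ZMod p) (hcg : cg ⟨t - 1, by omega⟩ ≠ 0)
    (dg : Fin t → Fin t → ZMod p)
    (eg : Fin (t + 1) → ZMod p) (e' : ZMod p)
    (F : (Fin t → ZMod p) → (Fin (n + t + 1) → ZMod p) → ZMod p)
    (hF : ∀ h x, F h x =
      (∑ r : Fin t, ∑ α ∈ Finset.range (m r - 1),
        x (Fin.castLE (by omega) (π r α)) * x (Fin.castLE (by omega) (π r (α + 1)))) +
      (∑ α : Fin n, d α * x (Fin.castLE (by omega) α)) +
      (∑ r : Fin t, cg r *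
        (x ⟨n + 1 + (r : ℕ), by have := r.isLt; omega⟩ * x ⟨n, by omega⟩)) +
      (∑ μ : Fin t, ∑ ν : Fin t,
        if (μ : ℕ) < (ν : ℕ) ∧ (ν : ℕ) + 2 ≤ t then
          dg μ ν * (x ⟨n + 1 + (μ : ℕ), by have := μ.isLt; omega⟩ *
            x ⟨n + 1 + (ν : ℕ), by have := ν.isLt; omega⟩)
        else 0) +
      (∑ β : Fin (t + 1), eg β * x ⟨n + (β : ℕ), by have := β.isLt; omega⟩) + e' +
      (∑ r : Fin t, x (Fin.castLE (by omega) (π r 0)) *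
        x ⟨n + (r : ℕ), by have := r.isLt; omega⟩) +
      (∑ r : Fin t, h r * x (Fin.castLE (by omega) (π r (m r - 1))))) :
    ∀ h h' : Fin t → ZMod p, h ≠ h' →
      (p - 1) * p ^ (n + t) ≤
        hammingDist (xiVec p (n + t + 1) (F h)) (xiVec p (n + t + 1) (F h')) := by

  intro h h' hne
  classical
  obtain ⟨r0, hr0⟩ := Function.ne_iff.mp hne
  -- coordinates
  have hlt : ∀ r : Fin t, m r - 1 < m r := fun r => Nat.sub_lt (hm r) one_pos
  let c : Fin t → Fin (n + t + 1) := fun r => Fin.castLE (by omega) (π r (m r - 1))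
  have hcinj : Function.Injective c := by
    intro r s hrs
    have h1 : π r (m r - 1) = π s (m s - 1) := Fin.castLE_injective _ hrs
    have h2 := hπ.1 (a₁ := ⟨r, ⟨m r - 1, hlt r⟩⟩) (a₂ := ⟨s, ⟨m s - 1, hlt s⟩⟩) h1
    exact congrArg Sigma.fst h2
  -- difference of the two functions
  have hdiff : ∀ v : Fin (n + t + 1) → ZMod p,
      F h v - F h' v = ∑ r : Fin t, (h r - h' r) * v (c r) := by
    intro v
    rw [hF, hF]
    have : ∀ X S S' : ZMod p, (X + S) - (X + S') = S - S' := by intros; ring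
    rw [this]
    rw [← Finset.sum_sub_distrib]
    exact Finset.sum_congr rfl fun r _ => by rw [← sub_mul]
  -- rewrite Hamming distance as a count over ZMod p vectors
  have hbij := digit_map_bijective p (n + t + 1)
  have hcount : hammingDist (xiVec p (n + t + 1) (F h)) (xiVec p (n + t + 1) (F h'))
      = #{v : Fin (n + t + 1) → ZMod p | F h v ≠ F h' v} := by
    show #{x : Fin (p ^ (n + t + 1)) | xiVec p (n + t + 1) (F h) x ≠ xiVec p (n + t + 1) (F h') x} = _
    refine Finset.card_bij (fun (x : Fin (p ^ (n + t + 1))) _ =>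
      fun k : Fin (n + t + 1) => digitZ p (x : ℕ) (k : ℕ)) ?_ ?_ ?_
    · intro x hx
      simp only [Finset.mem_filter, Finset.mem_univ, true_and] at hx ⊢
      exact hx
    · intro x _ y _ hxy
      exact hbij.1 hxy
    · intro v hv
      obtain ⟨x, hx⟩ := hbij.2 v
      refine ⟨x, ?_, hx⟩
      simp only [Finset.mem_filter, Finset.mem_univ, true_and] at hv ⊢
      have hx' : (fun k : Fin (n + t + 1) => digitZ p (x : ℕ) (k : ℕ)) = v := hx
      show F h (fun k : Fin (n + t + 1) => digitZ p (x : ℕ) (k : ℕ)) ≠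
        F h' (fun k : Fin (n + t + 1) => digitZ p (x : ℕ) (k : ℕ))
      rw [hx']; exact hv
  rw [hcount]
  have heq : ∀ v : Fin (n + t + 1) → ZMod p, (F h v ≠ F h' v) ↔
      ((fun w => F h w - F h' w) v ≠ 0) := by
    intro v; simp [sub_ne_zero]
  rw [Finset.filter_congr fun v _ => by rw [heq v]]
  have := count_lb p (n + t + 1) (c r0) (h r0 - h' r0) (sub_ne_zero.mpr hr0)
    (fun w => F h w - F h' w) ?_
  · simpa using this
  · intro v w hvw
    simp only [hdiff]
    rw [← Finset.sum_sub_distrib]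
    rw [Finset.sum_eq_single r0]
    · ring
    · intro r _ hr
      rw [hvw (c r) (fun hc => hr (hcinj hc))]
      ring
    · intro habs; exact absurd (Finset.mem_univ r0) habs
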